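/- Let P_1P_2Q_2Q_1 be a centroaffine butterfly, i.e., [P_1,P_2]=[Q_1,Q_2] and [P_1,Q_1]=[P_2,Q_2], with P_1=(1,0), P_2=(a,b), Q_2=(0,1), Q_1=(b,a) (b≠0, a²≠b²). Then for every point X=(x,y) with xy ≠ ab, the composition R_{X, P_2} followed by R_{R_{X,P_2}(P_1), Q_2} applied starting from P_1 produces the same point as the composition going through Q_1: the quadrilateral's Lax transformation is the identity for all values of the constant. Concretely: with X=(x,y), one has R_{X,P_2}(P_1) = (ab − xy, b² − y²)/(bx − ay) and the next reflection yields (−y, (−y(a²+b²) + abx + y³)/(ab − xy)), which is symmetric under (a,b) ↔ (b,a). -/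

import Mathlib

/-- The 2×2 determinant of two vectors in ℝ². -/
noncomputable def det2 (A B : ℝ × ℝ) : ℝ := A.1 * B.2 - A.2 * B.1

/-- The centroaffine reflection `R_{Q,P}(X) = ([Q,X]·Q + [X,P]·P) / [Q,P]`. -/
noncomputable def careflect (Q P X : ℝ × ℝ) : ℝ × ℝ :=
  (det2 Q P)⁻¹ • (det2 Q X • Q + det2 X P • P)

/-- for the centroaffine butterfly `P₁ = (1,0)`, `P₂ = (a,b)`, `Q₂ = (0,1)`,
`Q₁ = (b,a)`, and any starting point `X = (x,y)`, one has
`R_{X,P₂}(P₁) = (ab − xy, b² − y²)/(bx − ay)`, and the second reflection yields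
`(−y, (−y(a²+b²) + abx + y³)/(ab − xy))`, an expression symmetric under `(a,b) ↔ (b,a)`;
hence the Lax transformation of the butterfly is the identity for all values of the
constant. -/
theorem stmt_9 (a b x y : ℝ) (hb : b ≠ 0) (hab : a ^ 2 ≠ b ^ 2)
    (hxy : x * y ≠ a * b) (hden : b * x - a * y ≠ 0) :
    careflect (x, y) (a, b) (1, 0)
        = ((a * b - x * y) / (b * x - a * y), (b ^ 2 - y ^ 2) / (b * x - a * y))
    ∧ careflect (careflect (x, y) (a, b) (1, 0)) (0, 1) (a, b)
        = (-y, (-y * (a ^ 2 + b ^ 2) + a * b * x + y ^ 3) / (a * b - x * y))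
    ∧ careflect (careflect (x, y) (a, b) (1, 0)) (0, 1) (a, b)
        = (-y, (-y * (b ^ 2 + a ^ 2) + b * a * x + y ^ 3) / (b * a - x * y)) := by
  have h1 : a * b - x * y ≠ 0 := sub_ne_zero_of_ne hxy.symm
  have h1' : b * a - x * y ≠ 0 := by intro h; apply h1; linarith
  have h1'' : -(x * y) + b * a ≠ 0 := by intro h; apply h1; linarith
  have h2 : x * b - y * a ≠ 0 := by intro h; apply hden; linarith
  have h2' : -(y * a) + x * b ≠ 0 := by intro h; apply hden; linarith
  have h2'' : -(y * a) + b * x ≠ 0 := by intro h; apply hden; linarith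
  have hA : careflect (x, y) (a, b) (1, 0)
      = ((a * b - x * y) / (b * x - a * y), (b ^ 2 - y ^ 2) / (b * x - a * y)) := by
    simp only [careflect, det2, Prod.smul_mk, Prod.mk_add_mk, Prod.mk.injEq, smul_eq_mul]
    constructor <;> field_simp [h2', h2''] <;> ring
  rw [hA]
  refine ⟨rfl, ?_, ?_⟩ <;>
  · simp only [careflect, det2, Prod.smul_mk, Prod.mk_add_mk, Prod.mk.injEq, smul_eq_mul]
    constructor <;> field_simp [h1, h1', h1''] <;> ring
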